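/- For each index i ∈ {1,…,24}, exactly 9 indices j ∈ {1,…,24} satisfy a_i a_j + b_i b_j + c_i c_j + d_i d_j = 0, where P_j = (a_j:b_j:c_j:d_j) are the 24 points of the F4 configuration. Consequently, the degree-24 polynomial ∏_{j=1}^{24} (a_j x + b_j y + c_j z + d_j w) vanishes to order at least 9 at every point of the F4 configuration, so α(I(F4)^{(9)}) ≤ 24. -/

import Mathlib

open MvPolynomial

/-- A polynomial `F` vanishes to order at least `m` at a point with representative
vector `v` if all partial derivatives of `F` of total order less than `m` vanish at `v`. -/
def vanishesToOrder (F : MvPolynomial (Fin 4) ℂ) (v : Fin 4 → ℂ) (m : ℕ) : Prop :=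
  ∀ l : List (Fin 4), l.length < m →
    eval v (l.foldl (fun G i => pderiv i G) F) = 0

/-- The least degree of a nonzero homogeneous polynomial vanishing to order at least `m`
at every point of the configuration `Z`. -/
noncomputable def alphaSymbolic (Z : Set (Fin 4 → ℂ)) (m : ℕ) : ℕ :=
  sInf { d | ∃ F : MvPolynomial (Fin 4) ℂ, F ≠ 0 ∧ F.IsHomogeneous d ∧
    ∀ v ∈ Z, vanishesToOrder F v m }

/-- The 24 points of the F4 configuration, given by representative vectors. -/
def F4Pts : Fin 24 → (Fin 4 → ℂ) :=
  ![![1, 1, 0, 0], ![1, -1, 0, 0], ![1, 0, 1, 0], ![1, 0, -1, 0],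
    ![1, 0, 0, 1], ![1, 0, 0, -1], ![0, 1, 1, 0], ![0, 1, -1, 0],
    ![0, 1, 0, 1], ![0, 1, 0, -1], ![0, 0, 1, 1], ![0, 0, 1, -1],
    ![1, 0, 0, 0], ![0, 1, 0, 0], ![0, 0, 1, 0], ![0, 0, 0, 1],
    ![1, 1, 1, 1], ![1, 1, -1, -1], ![1, -1, 1, -1], ![1, -1, -1, 1],
    ![-1, 1, 1, 1], ![1, -1, 1, 1], ![1, 1, -1, 1], ![1, 1, 1, -1]]

/-- The F4 configuration as a set of points. -/
def F4Config : Set (Fin 4 → ℂ) := Set.range F4Pts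

/-- The product of the 24 linear forms dual to the points of the F4 configuration. -/
noncomputable def dualPlanesProduct : MvPolynomial (Fin 4) ℂ :=
  ∏ j : Fin 24, (∑ k : Fin 4, C (F4Pts j k) * X k)

/-! ### Auxiliary lemmas -/

/-- Integer version of the F4 point matrix. -/
def NInt : Fin 24 → Fin 4 → ℤ :=
  ![![1, 1, 0, 0], ![1, -1, 0, 0], ![1, 0, 1, 0], ![1, 0, -1, 0],
    ![1, 0, 0, 1], ![1, 0, 0, -1], ![0, 1, 1, 0], ![0, 1, -1, 0],
    ![0, 1, 0, 1], ![0, 1, 0, -1], ![0, 0, 1, 1], ![0, 0, 1, -1],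
    ![1, 0, 0, 0], ![0, 1, 0, 0], ![0, 0, 1, 0], ![0, 0, 0, 1],
    ![1, 1, 1, 1], ![1, 1, -1, -1], ![1, -1, 1, -1], ![1, -1, -1, 1],
    ![-1, 1, 1, 1], ![1, -1, 1, 1], ![1, 1, -1, 1], ![1, 1, 1, -1]]

set_option maxHeartbeats 1000000 in
lemma F4cast (i : Fin 24) (k : Fin 4) : F4Pts i k = ((NInt i k : ℤ) : ℂ) := by
  fin_cases i <;> fin_cases k <;>
    first
      | exact (by norm_num : (0:ℂ) = ((0:ℤ):ℂ))
      | exact (by norm_num : (1:ℂ) = ((1:ℤ):ℂ))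
      | exact (by norm_num : (-1:ℂ) = ((-1:ℤ):ℂ))

lemma dot_cast (i j : Fin 24) :
    ∑ k : Fin 4, F4Pts i k * F4Pts j k = ((∑ k : Fin 4, NInt i k * NInt j k : ℤ) : ℂ) := by
  simp only [F4cast]; push_cast; ring

set_option maxRecDepth 10000 in
lemma cardLemma : ∀ i : Fin 24, (Finset.univ.filter fun j : Fin 24 =>
    (∑ k : Fin 4, NInt i k * NInt j k) = 0).card = 9 := by decide

lemma selfdot : ∀ j : Fin 24, (∑ k : Fin 4, NInt j k * NInt j k) ≠ 0 := by decide

lemma vanish_zero (F : MvPolynomial (Fin 4) ℂ) (v : Fin 4 → ℂ) : vanishesToOrder F v 0 :=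
  fun _ hl => absurd hl (Nat.not_lt_zero _)

lemma vanish_pderiv {F v m} (h : vanishesToOrder F v m) (i : Fin 4) :
    vanishesToOrder (pderiv i F) v (m - 1) :=
  fun l hl => h (i :: l) (by simp only [List.length_cons]; omega)

lemma eval_foldl_add (v : Fin 4 → ℂ) : ∀ (l : List (Fin 4)) (F G : MvPolynomial (Fin 4) ℂ),
    eval v (l.foldl (fun G i => pderiv i G) (F + G)) =
      eval v (l.foldl (fun G i => pderiv i G) F) + eval v (l.foldl (fun G i => pderiv i G) G)
  | [], F, G => by simp
  | (i :: l), F, G => by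
      simp only [List.foldl_cons, map_add]
      exact eval_foldl_add v l _ _

lemma mul_vanish_aux (v : Fin 4 → ℂ) : ∀ (l : List (Fin 4)) (a b : ℕ)
    (F G : MvPolynomial (Fin 4) ℂ), l.length < a + b →
    vanishesToOrder F v a → vanishesToOrder G v b →
    eval v (l.foldl (fun G i => pderiv i G) (F * G)) = 0
  | [], a, b, F, G, hl, hF, hG => by
      simp only [List.foldl_nil, map_mul]
      rcases Nat.eq_zero_or_pos a with ha | ha
      · have hb : 0 < b := by omega
        have := hG [] (by simpa using hb)
        simp only [List.foldl_nil] at this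
        rw [this, mul_zero]
      · have := hF [] (by simpa using ha)
        simp only [List.foldl_nil] at this
        rw [this, zero_mul]
  | (i :: l), a, b, F, G, hl, hF, hG => by
      simp only [List.foldl_cons, pderiv_mul]
      rw [eval_foldl_add]
      have h1 := mul_vanish_aux v l (a - 1) b (pderiv i F) G
        (by simp at hl; omega) (vanish_pderiv hF i) hG
      have h2 := mul_vanish_aux v l a (b - 1) F (pderiv i G)
        (by simp at hl; omega) hF (vanish_pderiv hG i)
      rw [h1, h2, add_zero]

lemma vanish_mul {v : Fin 4 → ℂ} {a b : ℕ} {F G : MvPolynomial (Fin 4) ℂ}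
    (hF : vanishesToOrder F v a) (hG : vanishesToOrder G v b) :
    vanishesToOrder (F * G) v (a + b) :=
  fun l hl => mul_vanish_aux v l a b F G hl hF hG

lemma vanish_prod {v : Fin 4 → ℂ} (T : Finset (Fin 24)) (L : Fin 24 → MvPolynomial (Fin 4) ℂ)
    (h : ∀ j ∈ T, eval v (L j) = 0) :
    vanishesToOrder (∏ j ∈ T, L j) v T.card := by
  induction T using Finset.induction with
  | empty => simpa using vanish_zero 1 v
  | @insert j T hj ih =>
    rw [Finset.prod_insert hj, Finset.card_insert_of_notMem hj]
    have h1 : vanishesToOrder (L j) v 1 := by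
      intro l hl
      interval_cases hl' : l.length
      · rcases List.length_eq_zero_iff.mp hl' with rfl
        exact h j (Finset.mem_insert_self j T)
    have := vanish_mul h1 (ih fun k hk => h k (Finset.mem_insert_of_mem hk))
    rwa [Nat.add_comm] at this

/-- The linear form dual to the `j`-th point. -/
noncomputable def Lform (j : Fin 24) : MvPolynomial (Fin 4) ℂ :=
  ∑ k : Fin 4, C (F4Pts j k) * X k

lemma eval_Lform (i j : Fin 24) :
    eval (F4Pts i) (Lform j) = ((∑ k : Fin 4, NInt j k * NInt i k : ℤ) : ℂ) := by
  rw [← dot_cast]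
  simp [Lform]

lemma part1 : ∀ i : Fin 24,
    (Finset.univ.filter fun j : Fin 24 =>
      ∑ k : Fin 4, F4Pts i k * F4Pts j k = 0).card = 9 := by
  intro i
  rw [show (Finset.univ.filter fun j : Fin 24 =>
      ∑ k : Fin 4, F4Pts i k * F4Pts j k = 0) =
      (Finset.univ.filter fun j : Fin 24 =>
      (∑ k : Fin 4, NInt i k * NInt j k) = 0) from
    Finset.filter_congr fun j _ => by rw [dot_cast]; exact_mod_cast Iff.rfl]
  exact cardLemma i

lemma part2 : ∀ v ∈ F4Config, vanishesToOrder dualPlanesProduct v 9 := by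
  rintro v ⟨i, rfl⟩
  classical
  set T : Finset (Fin 24) :=
    Finset.univ.filter (fun j : Fin 24 => (∑ k : Fin 4, NInt i k * NInt j k) = 0) with hTdef
  have hT : T.card = 9 := cardLemma i
  have hprod : dualPlanesProduct = (∏ j ∈ T, Lform j) * ∏ j ∈ Tᶜ, Lform j :=
    (Finset.prod_mul_prod_compl T _).symm
  have h1 : vanishesToOrder (∏ j ∈ T, Lform j) (F4Pts i) T.card := by
    apply vanish_prod
    intro j hj
    rw [eval_Lform]
    rw [hTdef, Finset.mem_filter] at hj
    rw [show (∑ k : Fin 4, NInt j k * NInt i k) = ∑ k : Fin 4, NInt i k * NInt j k by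
      exact Finset.sum_congr rfl fun k _ => mul_comm _ _, hj.2]
    norm_num
  have h2 : vanishesToOrder (∏ j ∈ Tᶜ, Lform j) (F4Pts i) 0 := vanish_zero _ _
  have := vanish_mul h1 h2
  rw [Nat.add_zero, hT] at this
  rw [hprod]
  exact this

lemma Lform_ne_zero (j : Fin 24) : Lform j ≠ 0 := by
  intro h
  have : eval (F4Pts j) (Lform j) = 0 := by rw [h]; simp
  rw [eval_Lform] at this
  exact selfdot j (by exact_mod_cast this)

lemma Lform_homog (j : Fin 24) : (Lform j).IsHomogeneous 1 :=
  IsHomogeneous.sum _ _ _ fun k _ => isHomogeneous_C_mul_X _ _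

/-- For each point of the F4 configuration, exactly 9 of the 24 dual planes pass through
it; consequently the degree 24 product of the dual linear forms vanishes to order at
least 9 at every point of the configuration, so `α(I(F4)^{(9)}) ≤ 24`. -/
theorem F4_dual_planes :
    (∀ i : Fin 24,
      (Finset.univ.filter fun j : Fin 24 =>
        ∑ k : Fin 4, F4Pts i k * F4Pts j k = 0).card = 9) ∧
    (∀ v ∈ F4Config, vanishesToOrder dualPlanesProduct v 9) ∧
    alphaSymbolic F4Config 9 ≤ 24 := by
  refine ⟨part1, part2, ?_⟩
  apply Nat.sInf_le
  refine ⟨dualPlanesProduct, ?_, ?_, part2⟩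
  · rw [dualPlanesProduct, Finset.prod_ne_zero_iff]
    exact fun j _ => Lform_ne_zero j
  · have := IsHomogeneous.prod Finset.univ Lform (fun _ => 1)
      (fun j _ => Lform_homog j)
    have h : IsHomogeneous dualPlanesProduct (∑ _j : Fin 24, 1) := this
    simpa using h
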